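/- Let A be a real m×n matrix, b ∈ ℝ^m, and assume V = {v ∈ ℝ^n : A v ≥ b} is nonempty and bounded. Let (x^i, c^i), i = 1,…,N, be data with x^i ∈ ℝ^K and c^i ∈ ℝ^n. For every fixed ω ∈ ℝ^{n×K}, the pessimistic value Λ(ω) = sup{(1/N) Σ_{i=1}^N c^i · v^i : v^i ∈ V*(ω x^i) for each i} equals the minimum of Σ_{i=1}^N (b · μ^i + (ω x^i) · δ^i) over all (μ^i, δ^i, γ^i)_{i=1}^N with μ^i ∈ ℝ^m, δ^i ∈ ℝ^n, γ^i ∈ ℝ satisfying A^T μ^i + γ^i (ω x^i) = (1/N) c^i, A δ^i − γ^i b ≥ 0, μ^i ≤ 0 and γ^i ≥ 0 for all i; moreover this feasible set is nonempty and the minimum is attained. -/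

import Mathlib

open Matrix Set BigOperators

noncomputable section

/-- Finitely generated convex cone. -/
def fgCone {E : Type*} [AddCommMonoid E] [Module ℝ E] {κ : Type*} [Fintype κ]
    (g : κ → E) : Set E :=
  {x | ∃ t : κ → ℝ, (∀ j, 0 ≤ t j) ∧ x = ∑ j, t j • g j}

lemma caratheodory_cone_aux {E : Type*} [AddCommGroup E] [Module ℝ E] {κ : Type*}
    [Fintype κ] [DecidableEq κ] (g : κ → E) (s : Finset κ) :
    ∀ t : κ → ℝ, (∀ j, 0 ≤ t j) →
      ∃ s' : Finset κ, s' ⊆ s ∧ LinearIndependent ℝ (fun j : s' => g j) ∧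
        ∃ t' : κ → ℝ, (∀ j, 0 ≤ t' j) ∧ ∑ j ∈ s, t j • g j = ∑ j ∈ s', t' j • g j := by
  induction s using Finset.strongInduction with
  | _ s IH =>
    intro t ht
    by_cases hli : LinearIndependent ℝ (fun j : s => g j)
    · exact ⟨s, le_refl s, hli, t, ht, rfl⟩
    · -- get a dependence relation with a positive coefficient
      obtain ⟨a, ha0, i0, hi0⟩ := Fintype.not_linearIndependent_iff.1 hli
      have key : ∃ bb : s → ℝ, (∑ i, bb i • g (i : κ) = 0) ∧ 0 < bb i0 := by
        rcases hi0.lt_or_gt with hneg | hpos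
        · exact ⟨-a, by simp only [Pi.neg_apply, neg_smul, Finset.sum_neg_distrib, ha0,
            neg_zero], by simpa using hneg⟩
        · exact ⟨a, ha0, hpos⟩
      obtain ⟨bb, hbb0, hbbpos⟩ := key
      set a' : κ → ℝ := fun j => if h : j ∈ s then bb ⟨j, h⟩ else 0 with ha'
      have ha'sum : ∑ j ∈ s, a' j • g j = 0 := by
        rw [← Finset.sum_attach s (fun j => a' j • g j)]
        simpa [ha'] using hbb0
      have hpos : ∃ j ∈ s, 0 < a' j := ⟨i0, i0.2, by simpa [ha', i0.2] using hbbpos⟩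
      -- pick the minimizer of t j / a' j over positive coefficients
      have hPne : ({j ∈ s | 0 < a' j} : Finset κ).Nonempty := by
        obtain ⟨j, hj, hja⟩ := hpos
        exact ⟨j, Finset.mem_filter.2 ⟨hj, hja⟩⟩
      obtain ⟨j0, hj0mem, hj0min⟩ :=
        Finset.exists_min_image _ (fun j => t j / a' j) hPne
      rw [Finset.mem_filter] at hj0mem
      obtain ⟨hj0s, hj0pos⟩ := hj0mem
      set θ := t j0 / a' j0 with hθ
      have hθ0 : 0 ≤ θ := div_nonneg (ht j0) hj0pos.le
      set t' : κ → ℝ := fun j => if j ∈ s then t j - θ * a' j else 0 with ht'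
      have ht'nn : ∀ j, 0 ≤ t' j := by
        intro j
        by_cases hj : j ∈ s
        · simp only [ht', if_pos hj]
          rcases lt_or_ge 0 (a' j) with hja | hja
          · have h1 := hj0min j (Finset.mem_filter.2 ⟨hj, hja⟩)
            have h2 := (le_div_iff₀ hja).1 h1
            linarith
          · nlinarith [ht j, mul_nonpos_of_nonneg_of_nonpos hθ0 hja]
        · simp [ht', hj]
      have ht'j0 : t' j0 = 0 := by
        simp only [ht', if_pos hj0s, hθ]
        field_simp
        ring
      have hsum : ∑ j ∈ s, t j • g j = ∑ j ∈ s.erase j0, t' j • g j := by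
        have h1 : ∑ j ∈ s, t' j • g j = ∑ j ∈ s, t j • g j - θ • ∑ j ∈ s, a' j • g j := by
          rw [Finset.smul_sum, ← Finset.sum_sub_distrib]
          refine Finset.sum_congr rfl fun j hj => ?_
          simp [ht', if_pos hj, sub_smul, smul_smul]
        rw [← Finset.add_sum_erase _ _ hj0s] at h1
        rw [ha'sum, smul_zero, sub_zero] at h1
        rw [ht'j0, zero_smul, zero_add] at h1
        exact h1.symm
      obtain ⟨s', hs'sub, hs'li, t'', ht''nn, ht''sum⟩ :=
        IH (s.erase j0) (Finset.erase_ssubset hj0s) t' ht'nn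
      exact ⟨s', hs'sub.trans (Finset.erase_subset _ _), hs'li, t'', ht''nn,
        hsum.trans ht''sum⟩

lemma isClosed_coneOf {E : Type*} [NormedAddCommGroup E] [NormedSpace ℝ E]
    [FiniteDimensional ℝ E] {κ : Type*} [Fintype κ] [DecidableEq κ] (g : κ → E)
    (s : Finset κ) (hs : LinearIndependent ℝ (fun j : s => g j)) :
    IsClosed ((fun t : s → ℝ => ∑ j, t j • g (j : κ)) '' {t | ∀ j, 0 ≤ t j}) := by
  set L : (s → ℝ) →ₗ[ℝ] E :=
    { toFun := fun t => ∑ j, t j • g (j : κ)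
      map_add' := by
        intro u v
        simp [add_smul, Finset.sum_add_distrib]
      map_smul' := by
        intro c u
        simp [smul_smul, Finset.smul_sum] } with hL
  have hker : LinearMap.ker L = ⊥ := by
    rw [LinearMap.ker_eq_bot']
    intro t htz
    have := Fintype.linearIndependent_iff.1 hs t htz
    funext j; exact this j
  have hemb := LinearMap.isClosedEmbedding_of_injective (f := L) hker
  have hcl : IsClosed {t : s → ℝ | ∀ j, 0 ≤ t j} := by
    have : {t : s → ℝ | ∀ j, 0 ≤ t j} = ⋂ j, (fun t : s → ℝ => t j) ⁻¹' (Ici 0) := by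
      ext t; simp [Set.mem_iInter]
    rw [this]
    exact isClosed_iInter fun j => (isClosed_Ici).preimage (continuous_apply j)
  exact hemb.isClosedMap _ hcl

lemma isClosed_fgCone {E : Type*} [NormedAddCommGroup E] [NormedSpace ℝ E]
    [FiniteDimensional ℝ E] {κ : Type*} [Fintype κ] [DecidableEq κ] (g : κ → E) :
    IsClosed (fgCone g) := by
  have hrepr : fgCone g = ⋃ (s : Finset κ) (_ : LinearIndependent ℝ (fun j : s => g j)),
      (fun t : s → ℝ => ∑ j, t j • g (j : κ)) '' {t | ∀ j, 0 ≤ t j} := by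
    ext x
    constructor
    · rintro ⟨t, ht, rfl⟩
      obtain ⟨s', hsub, hli, t', ht', hsum⟩ :=
        caratheodory_cone_aux g Finset.univ t ht
      refine Set.mem_iUnion.2 ⟨s', Set.mem_iUnion.2 ⟨hli, ?_⟩⟩
      refine ⟨fun j => t' j, fun j => ht' j, ?_⟩
      rw [hsum, ← Finset.sum_attach s' (fun j => t' j • g j)]
      rfl
    · rintro hx
      obtain ⟨s, hs⟩ := Set.mem_iUnion.1 hx
      obtain ⟨hli, t, ht, rfl⟩ := Set.mem_iUnion.1 hs
      refine ⟨fun j => if h : j ∈ s then t ⟨j, h⟩ else 0,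
        fun j => by
          by_cases h : j ∈ s
          · simpa [h] using ht ⟨j, h⟩
          · simp [h], ?_⟩
      rw [show ∑ j : κ, (if h : j ∈ s then t ⟨j, h⟩ else 0) • g j
            = ∑ j ∈ s, (if h : j ∈ s then t ⟨j, h⟩ else (0:ℝ)) • g j from
          (Finset.sum_subset (Finset.subset_univ s) (by intro j _ hj; simp [hj])).symm]
      rw [← Finset.sum_attach s (fun j => (if h : j ∈ s then t ⟨j, h⟩ else (0:ℝ)) • g j)]
      exact Finset.sum_congr rfl fun j _ => by simp [j.2]
  rw [hrepr]
  exact isClosed_iUnion_of_finite fun s =>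
    isClosed_iUnion_of_finite fun hs => isClosed_coneOf g s hs

open scoped InnerProductSpace in
lemma farkas_euclidean {ι κ : Type*} [Fintype ι] [Fintype κ] [DecidableEq κ]
    (g : κ → EuclideanSpace ℝ ι) (b : EuclideanSpace ℝ ι) (hb : b ∉ fgCone g) :
    ∃ y : EuclideanSpace ℝ ι, (∀ j, 0 ≤ ⟪g j, y⟫_ℝ) ∧ ⟪y, b⟫_ℝ < 0 := by
  set K : ConvexCone ℝ (EuclideanSpace ℝ ι) :=
    { carrier := fgCone g
      smul_mem' := by
        rintro c hc x ⟨t, ht, rfl⟩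
        exact ⟨fun j => c * t j, fun j => mul_nonneg hc.le (ht j),
          by rw [Finset.smul_sum]; exact Finset.sum_congr rfl fun j _ => (smul_smul c (t j) (g j))⟩
      add_mem' := by
        rintro x ⟨t, ht, rfl⟩ y ⟨u, hu, rfl⟩
        exact ⟨fun j => t j + u j, fun j => add_nonneg (ht j) (hu j),
          by rw [← Finset.sum_add_distrib]; exact Finset.sum_congr rfl fun j _ => (add_smul (t j) (u j) (g j)).symm⟩ } with hK
  have hne : (K : Set (EuclideanSpace ℝ ι)).Nonempty :=
    ⟨0, ⟨fun _ => 0, fun _ => le_refl 0, by simp⟩⟩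
  have hcl : IsClosed (K : Set (EuclideanSpace ℝ ι)) := isClosed_fgCone g
  obtain ⟨y, hy1, hy2⟩ :=
    ProperCone.hyperplane_separation' (E := EuclideanSpace ℝ ι)
      ({ carrier := fgCone g
         add_mem' := fun {a b} ha hb => K.add_mem ha hb
         zero_mem' := ⟨fun _ => 0, fun _ => le_refl 0, by simp⟩
         smul_mem' := by
           rintro c x ⟨t, ht, rfl⟩
           exact ⟨fun j => (c : ℝ) * t j, fun j => mul_nonneg c.2 (ht j),
             by change (c : ℝ) • ∑ j, t j • g j = _; rw [Finset.smul_sum]; exact Finset.sum_congr rfl fun j _ => (smul_smul (c : ℝ) (t j) (g j))⟩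
         isClosed' := hcl } : ProperCone ℝ (EuclideanSpace ℝ ι)) hb
  refine ⟨y, fun j => hy1 (g j) ?_, by rw [real_inner_comm]; exact hy2⟩
  show g j ∈ fgCone g
  exact ⟨Pi.single j 1, fun k => by by_cases h : k = j <;> simp [Pi.single_apply, h],
    by simp [Pi.single_apply, ite_smul]⟩

open scoped InnerProductSpace in
lemma inner_eq_dot {ι : Type*} [Fintype ι] (x y : EuclideanSpace ℝ ι) :
    ⟪x, y⟫_ℝ = ∑ i, x i * y i := by
  simp [PiLp.inner_apply, RCLike.inner_apply, conj_trivial, mul_comm]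

lemma ray_eq_zero {n : ℕ} {S : Set (Fin n → ℝ)} (hbd : Bornology.IsBounded S)
    {v₀ z : Fin n → ℝ} (hv : ∀ t : ℝ, 0 ≤ t → v₀ + t • z ∈ S) : z = 0 := by
  by_contra hz
  obtain ⟨R, hR⟩ := isBounded_iff_forall_norm_le.1 hbd
  have hzn : 0 < ‖z‖ := norm_pos_iff.2 hz
  have hR0 : 0 ≤ R := le_trans (norm_nonneg _) (hR _ (by simpa using hv 0 le_rfl))
  set t : ℝ := (R + ‖v₀‖ + 1) / ‖z‖ with htdef
  have ht0 : 0 ≤ t := div_nonneg (by positivity) hzn.le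
  have hmem := hR _ (hv t ht0)
  have h1 : ‖t • z‖ ≤ ‖v₀ + t • z‖ + ‖v₀‖ := by
    have h4 : ‖t • z‖ = ‖(v₀ + t • z) - v₀‖ := by congr 1; abel
    rw [h4]
    exact norm_sub_le (v₀ + t • z) v₀
  have h2 : ‖t • z‖ = t * ‖z‖ := by
    rw [norm_smul, Real.norm_eq_abs, abs_of_nonneg ht0]
  have h3 : t * ‖z‖ = R + ‖v₀‖ + 1 := div_mul_cancel₀ _ hzn.ne'
  nlinarith [hmem]

open scoped InnerProductSpace in
lemma strong_duality {n : ℕ} {ρ : Type*} [Fintype ρ] [DecidableEq ρ]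
    (G : Matrix ρ (Fin n) ℝ) (h : ρ → ℝ) (d : Fin n → ℝ)
    (hne : {v : Fin n → ℝ | G.mulVec v ≤ h}.Nonempty)
    (hbd : Bornology.IsBounded {v : Fin n → ℝ | G.mulVec v ≤ h}) :
    ∃ v₀, G.mulVec v₀ ≤ h ∧ ∃ y : ρ → ℝ,
      (∀ j, 0 ≤ y j) ∧ Gᵀ.mulVec y = d ∧ h ⬝ᵥ y = d ⬝ᵥ v₀ ∧
      ∀ v, G.mulVec v ≤ h → d ⬝ᵥ v ≤ d ⬝ᵥ v₀ := by
  set P := {v : Fin n → ℝ | G.mulVec v ≤ h} with hP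
  have hGcont : Continuous fun v : Fin n → ℝ => G.mulVec v :=
    G.mulVecLin.continuous_of_finiteDimensional
  have hPcl : IsClosed P := by
    have hPeq : P = (fun v => G.mulVec v) ⁻¹' (Set.Iic h) := rfl
    rw [hPeq]; exact isClosed_Iic.preimage hGcont
  have hPcp : IsCompact P := Metric.isCompact_of_isClosed_isBounded hPcl hbd
  have hdcont : Continuous fun v : Fin n → ℝ => d ⬝ᵥ v := by
    unfold dotProduct
    exact continuous_finset_sum _ fun i _ => continuous_const.mul (continuous_apply i)
  obtain ⟨v₀, hv₀P, hv₀max⟩ := hPcp.exists_isMaxOn hne hdcont.continuousOn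
  have hv₀max' : ∀ v, G.mulVec v ≤ h → d ⬝ᵥ v ≤ d ⬝ᵥ v₀ := fun v hv => hv₀max hv
  set p := d ⬝ᵥ v₀ with hpdef
  set g : (ρ ⊕ Unit) → EuclideanSpace ℝ (Fin n ⊕ Unit) :=
    fun k => WithLp.toLp 2 (Sum.elim (fun j => Sum.elim (G j) (fun _ => h j)) (fun _ => Sum.elim 0 (fun _ => 1)) k)
    with hg
  set bv : EuclideanSpace ℝ (Fin n ⊕ Unit) := WithLp.toLp 2 (Sum.elim d (fun _ => p)) with hbv
  have hmem : bv ∈ fgCone g := by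
    by_contra hnm
    obtain ⟨y, hy1, hy2⟩ := farkas_euclidean g bv hnm
    set z : Fin n → ℝ := fun i => y (Sum.inl i) with hz
    set τ : ℝ := y (Sum.inr ()) with hτdef
    have hτ : 0 ≤ τ := by
      have h0 := hy1 (Sum.inr ())
      rw [inner_eq_dot] at h0
      simpa [hg, Fintype.sum_sum_type] using h0
    have hrows : ∀ j, 0 ≤ G j ⬝ᵥ z + h j * τ := by
      intro j
      have h0 := hy1 (Sum.inl j)
      rw [inner_eq_dot] at h0
      simpa [hg, Fintype.sum_sum_type, dotProduct] using h0
    have hobj : d ⬝ᵥ z + p * τ < 0 := by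
      have h0 := hy2
      rw [inner_eq_dot] at h0
      have h1 : ∑ i : Fin n ⊕ Unit, y i * bv i = d ⬝ᵥ z + p * τ := by
        rw [Fintype.sum_sum_type]
        simp [hbv, dotProduct, mul_comm, hz, hτdef]
      rwa [h1] at h0
    rcases eq_or_lt_of_le hτ with hτ0 | hτpos
    · -- τ = 0 : recession direction -z, must be 0
      have hzz : (-z) = 0 := by
        refine ray_eq_zero hbd (v₀ := v₀) ?_
        intro t ht j
        have hGv₀ : G.mulVec v₀ ≤ h := hv₀P
        have hr := hrows j
        rw [← hτ0, mul_zero, add_zero] at hr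
        have : G.mulVec (v₀ + t • (-z)) j = G.mulVec v₀ j - t * (G j ⬝ᵥ z) := by
          simp [Matrix.mulVec_add, Matrix.mulVec_smul, mulVec, dotProduct,
            Finset.mul_sum, mul_comm, mul_left_comm, Finset.sum_sub_distrib,
            sub_eq_add_neg, Finset.sum_add_distrib, mul_add, add_mul]
        rw [this]
        have := hGv₀ j
        have hGz : 0 ≤ G j ⬝ᵥ z := hr
        nlinarith
      have hzeq : z = 0 := by simpa [neg_eq_zero] using hzz
      rw [← hτ0, mul_zero, add_zero, hzeq] at hobj
      simp at hobj
    · -- τ > 0 : better feasible point, contradiction with maximality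
      set w : Fin n → ℝ := (-τ⁻¹) • z with hw
      have hwP : G.mulVec w ≤ h := by
        intro j
        have hr := hrows j
        have heq : G.mulVec w j = -τ⁻¹ * (G j ⬝ᵥ z) := by
          simp only [hw, mulVec, dotProduct, Pi.smul_apply, smul_eq_mul]
          rw [Finset.mul_sum]
          exact Finset.sum_congr rfl fun i _ => by ring
        rw [heq]
        have h1 : -(h j * τ) ≤ G j ⬝ᵥ z := by linarith
        have h2 : -τ⁻¹ * (G j ⬝ᵥ z) ≤ -τ⁻¹ * (-(h j * τ)) := by
          rw [neg_mul, neg_mul, neg_le_neg_iff]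
          exact mul_le_mul_of_nonneg_left h1 (inv_pos.2 hτpos).le
        calc -τ⁻¹ * (G j ⬝ᵥ z) ≤ -τ⁻¹ * (-(h j * τ)) := h2
          _ = h j := by field_simp
      have hge := hv₀max' w hwP
      have heq : d ⬝ᵥ w = -τ⁻¹ * (d ⬝ᵥ z) := by
        simp only [hw, dotProduct, Pi.smul_apply, smul_eq_mul]
        rw [Finset.mul_sum]
        exact Finset.sum_congr rfl fun i _ => by ring
      rw [heq] at hge
      have h2 : d ⬝ᵥ z < -(p * τ) := by linarith
      have h3 : -τ⁻¹ * (d ⬝ᵥ z) > p := by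
        rw [neg_mul, gt_iff_lt, lt_neg]
        calc τ⁻¹ * (d ⬝ᵥ z) < τ⁻¹ * (-(p * τ)) := by
              apply mul_lt_mul_of_pos_left h2 (inv_pos.2 hτpos)
          _ = -p := by field_simp
      linarith
  obtain ⟨t, ht, hbveq⟩ := hmem
  set y : ρ → ℝ := fun j => t (Sum.inl j) with hy
  have hcomp : ∀ i : Fin n ⊕ Unit, bv i = ∑ k : ρ ⊕ Unit, t k * g k i := by
    intro i
    calc bv i = (∑ k : ρ ⊕ Unit, t k • g k) i := congrArg (fun w => w i) hbveq
      _ = ∑ k : ρ ⊕ Unit, (t k • g k) i := by rw [WithLp.ofLp_sum, Finset.sum_apply]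
      _ = ∑ k : ρ ⊕ Unit, t k * g k i := rfl
  have hGTy : Gᵀ.mulVec y = d := by
    funext i
    have h0 := hcomp (Sum.inl i)
    rw [Fintype.sum_sum_type] at h0
    simp only [hg, hbv, WithLp.ofLp_toLp, Sum.elim_inl, Sum.elim_inr, Pi.zero_apply, mul_zero,
      Finset.sum_const, Finset.card_univ, Fintype.card_unit, one_smul, smul_eq_mul,
      add_zero] at h0
    rw [Matrix.mulVec, dotProduct]
    rw [h0]
    exact Finset.sum_congr rfl fun j _ => by rw [Matrix.transpose_apply]; ring
  have hinr : p = ∑ j : ρ, t (Sum.inl j) * h j + t (Sum.inr ()) := by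
    have h0 := hcomp (Sum.inr ())
    rw [Fintype.sum_sum_type] at h0
    simpa [hg, hbv] using h0
  have hhy_le : h ⬝ᵥ y ≤ p := by
    rw [hinr, dotProduct]
    have : ∑ j : ρ, h j * y j = ∑ j : ρ, t (Sum.inl j) * h j :=
      Finset.sum_congr rfl fun j _ => by rw [hy]; ring
    rw [this]
    linarith [ht (Sum.inr ())]
  have hhy_ge : p ≤ h ⬝ᵥ y := by
    have h1 : (G.mulVec v₀) ⬝ᵥ y ≤ h ⬝ᵥ y := by
      rw [dotProduct, dotProduct]
      exact Finset.sum_le_sum fun j _ =>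
        mul_le_mul_of_nonneg_right (hv₀P j) (ht (Sum.inl j))
    have h2 : (G.mulVec v₀) ⬝ᵥ y = d ⬝ᵥ v₀ := by
      rw [← hGTy, Matrix.mulVec_transpose, dotProduct_comm,
        Matrix.dotProduct_mulVec]
    rw [hpdef, ← h2]
    exact h1
  exact ⟨v₀, hv₀P, y, fun j => ht (Sum.inl j), hGTy, le_antisymm hhy_le hhy_ge, hv₀max'⟩

/-- The polyhedron `V = {v : A v ≥ b}` (inequalities entrywise). -/
def polyV {m n : ℕ} (A : Matrix (Fin m) (Fin n) ℝ) (b : Fin m → ℝ) : Set (Fin n → ℝ) :=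
  {v | b ≤ A.mulVec v}

/-- `z*(c)`: the optimal (infimum) value of `c · v` over `V`. -/
noncomputable def zstar {m n : ℕ} (A : Matrix (Fin m) (Fin n) ℝ) (b : Fin m → ℝ)
    (c : Fin n → ℝ) : ℝ :=
  sInf ((fun v => c ⬝ᵥ v) '' polyV A b)

/-- `V*(c)`: the set of optimal solutions of `min {c · v : v ∈ V}`. -/
def Vstar {m n : ℕ} (A : Matrix (Fin m) (Fin n) ℝ) (b : Fin m → ℝ)
    (c : Fin n → ℝ) : Set (Fin n → ℝ) :=
  {v ∈ polyV A b | c ⬝ᵥ v = zstar A b c}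

/-- The pessimistic value `Λ(ω)` of the linear model `ω`. -/
noncomputable def pessValue {m n N K : ℕ} (A : Matrix (Fin m) (Fin n) ℝ) (b : Fin m → ℝ)
    (x : Fin N → Fin K → ℝ) (c : Fin N → Fin n → ℝ)
    (ω : Matrix (Fin n) (Fin K) ℝ) : ℝ :=
  sSup {r : ℝ | ∃ v : Fin N → Fin n → ℝ,
    (∀ i, v i ∈ Vstar A b (ω.mulVec (x i))) ∧
    r = (1 / (N : ℝ)) * ∑ i, c i ⬝ᵥ v i}


lemma polyV_isClosed {m n : ℕ} (A : Matrix (Fin m) (Fin n) ℝ) (b : Fin m → ℝ) :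
    IsClosed (polyV A b) := by
  have hGcont : Continuous fun v : Fin n → ℝ => A.mulVec v :=
    A.mulVecLin.continuous_of_finiteDimensional
  have : polyV A b = (fun v => A.mulVec v) ⁻¹' (Set.Ici b) := rfl
  rw [this]
  exact isClosed_Ici.preimage hGcont

lemma dot_continuous {n : ℕ} (c : Fin n → ℝ) :
    Continuous fun v : Fin n → ℝ => c ⬝ᵥ v := by
  unfold dotProduct
  exact continuous_finset_sum _ fun i _ => continuous_const.mul (continuous_apply i)

/-- `zstar` is attained and is a lower bound. -/
lemma zstar_isLeast {m n : ℕ} (A : Matrix (Fin m) (Fin n) ℝ) (b : Fin m → ℝ)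
    (hne : (polyV A b).Nonempty) (hbd : Bornology.IsBounded (polyV A b))
    (c' : Fin n → ℝ) :
    ∃ v₁ ∈ polyV A b, c' ⬝ᵥ v₁ = zstar A b c' ∧
      ∀ v ∈ polyV A b, zstar A b c' ≤ c' ⬝ᵥ v := by
  have hVcp : IsCompact (polyV A b) :=
    Metric.isCompact_of_isClosed_isBounded (polyV_isClosed A b) hbd
  have hScp : IsCompact ((fun v => c' ⬝ᵥ v) '' polyV A b) :=
    hVcp.image (dot_continuous c')
  have hSne : ((fun v => c' ⬝ᵥ v) '' polyV A b).Nonempty := hne.image _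
  have hmem := hScp.sInf_mem hSne
  obtain ⟨v₁, hv₁, hv₁eq⟩ := hmem
  exact ⟨v₁, hv₁, hv₁eq, fun v hv => csInf_le hScp.bddBelow ⟨v, hv, rfl⟩⟩

lemma per_index {m n : ℕ} (A : Matrix (Fin m) (Fin n) ℝ) (b : Fin m → ℝ)
    (hne : (polyV A b).Nonempty) (hbd : Bornology.IsBounded (polyV A b))
    (c' d : Fin n → ℝ) :
    ∃ q, IsGreatest {r : ℝ | ∃ v ∈ Vstar A b c', r = d ⬝ᵥ v} q ∧
      IsLeast {r : ℝ | ∃ (μ : Fin m → ℝ) (δ : Fin n → ℝ) (γ : ℝ),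
        (Aᵀ.mulVec μ + γ • c' = d ∧ γ • b ≤ A.mulVec δ ∧ μ ≤ 0 ∧ 0 ≤ γ) ∧
        r = b ⬝ᵥ μ + c' ⬝ᵥ δ} q := by
  obtain ⟨v₁, hv₁V, hv₁eq, hzlb⟩ := zstar_isLeast A b hne hbd c'
  set zs := zstar A b c' with hzs
  set G : Matrix (Fin m ⊕ Unit) (Fin n) ℝ :=
    Matrix.of (Sum.elim (fun j => -(A j)) (fun _ => c')) with hG
  set h : (Fin m ⊕ Unit) → ℝ := Sum.elim (-b) (fun _ => zs) with hh
  have hGmv : ∀ v : Fin n → ℝ, (∀ j, G.mulVec v j ≤ h j) ↔ (v ∈ polyV A b ∧ c' ⬝ᵥ v ≤ zs) := by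
    intro v
    constructor
    · intro hv
      refine ⟨fun j => ?_, ?_⟩
      · have := hv (Sum.inl j)
        simp only [hG, hh, Matrix.mulVec, Matrix.of_apply, Sum.elim_inl, Pi.neg_apply,
          neg_dotProduct, neg_le_neg_iff] at this
        simpa [Matrix.mulVec, dotProduct] using this
      · have := hv (Sum.inr ())
        simpa [hG, hh, Matrix.mulVec] using this
    · rintro ⟨hvV, hvz⟩ j
      cases j with
      | inl j =>
        have := hvV j
        simp only [hG, hh, Matrix.mulVec, Matrix.of_apply, Sum.elim_inl, Pi.neg_apply,
          neg_dotProduct, neg_le_neg_iff]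
        simpa [Matrix.mulVec, dotProduct] using this
      | inr u =>
        simpa [hG, hh, Matrix.mulVec] using hvz
  have hVs_eq : Vstar A b c' = {v | G.mulVec v ≤ h} := by
    ext v
    constructor
    · rintro ⟨hvV, hvz⟩
      exact (hGmv v).2 ⟨hvV, le_of_eq hvz⟩
    · intro hv
      obtain ⟨hvV, hvz⟩ := (hGmv v).1 hv
      exact ⟨hvV, le_antisymm hvz (hzlb v hvV)⟩
  have hPne : {v : Fin n → ℝ | G.mulVec v ≤ h}.Nonempty := by
    rw [← hVs_eq]; exact ⟨v₁, hv₁V, hv₁eq⟩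
  have hPbd : Bornology.IsBounded {v : Fin n → ℝ | G.mulVec v ≤ h} := by
    refine hbd.subset ?_
    intro v hv
    exact ((hGmv v).1 hv).1
  obtain ⟨v₀, hv₀P, y, hy0, hGTy, hhy, hmax⟩ := strong_duality G h d hPne hPbd
  have hv₀Vs : v₀ ∈ Vstar A b c' := by rw [hVs_eq]; exact hv₀P
  set μ : Fin m → ℝ := fun j => -(y (Sum.inl j)) with hμ
  set γ : ℝ := y (Sum.inr ()) with hγ
  set δ : Fin n → ℝ := γ • v₁ with hδ
  have hdual_eq : Aᵀ.mulVec μ + γ • c' = d := by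
    funext i
    have h0 := congrFun hGTy i
    rw [Matrix.mulVec, dotProduct, Fintype.sum_sum_type] at h0
    simp only [Matrix.transpose_apply, hG, Matrix.of_apply, Sum.elim_inl, Sum.elim_inr,
      Pi.neg_apply] at h0
    rw [← h0]
    simp only [Pi.add_apply, Pi.smul_apply, smul_eq_mul, Matrix.mulVec, dotProduct,
      Matrix.transpose_apply, hμ]
    rw [Finset.sum_congr rfl (fun j (_ : j ∈ Finset.univ) =>
      show A j i * -(y (Sum.inl j)) = -(A j i) * y (Sum.inl j) by ring)]
    simp [mul_comm, hγ]
  have hfeas2 : γ • b ≤ A.mulVec δ := by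
    intro j
    have h1 : A.mulVec δ j = γ * A.mulVec v₁ j := by
      simp [hδ, Matrix.mulVec_smul]
    rw [h1]
    have := hv₁V j
    exact mul_le_mul_of_nonneg_left this (hy0 (Sum.inr ()))
  have hμ0 : μ ≤ 0 := fun j => by simp [hμ, hy0 (Sum.inl j)]
  have hγ0 : 0 ≤ γ := hy0 (Sum.inr ())
  have hval : b ⬝ᵥ μ + c' ⬝ᵥ δ = d ⬝ᵥ v₀ := by
    rw [← hhy]
    have h1 : c' ⬝ᵥ δ = γ * zs := by
      rw [hδ, dotProduct_smul, smul_eq_mul, hv₁eq]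
    have h2 : h ⬝ᵥ y = b ⬝ᵥ μ + γ * zs := by
      rw [dotProduct, Fintype.sum_sum_type]
      simp only [hh, Sum.elim_inl, Sum.elim_inr, Pi.neg_apply]
      rw [dotProduct]
      congr 1
      · exact Finset.sum_congr rfl fun j _ => by simp [hμ]
      · simp [hγ, mul_comm]
    rw [h2, h1]
  refine ⟨d ⬝ᵥ v₀, ⟨⟨v₀, hv₀Vs, rfl⟩, ?_⟩, ⟨⟨μ, δ, γ, ⟨hdual_eq, hfeas2, hμ0, hγ0⟩, hval.symm⟩, ?_⟩⟩
  · rintro r ⟨v, hvVs, rfl⟩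
    have hv' : v ∈ {v | G.mulVec v ≤ h} := by rw [← hVs_eq]; exact hvVs
    exact hmax v hv'
  · rintro r ⟨μ', δ', γ', ⟨heq, hfeas, hμ'0, hγ'0⟩, rfl⟩
    have hcv₀ : c' ⬝ᵥ v₀ = zs := hv₀Vs.2
    have hsplit : d ⬝ᵥ v₀ = μ' ⬝ᵥ (A.mulVec v₀) + γ' * zs := by
      rw [← heq, add_dotProduct, smul_dotProduct, smul_eq_mul, hcv₀,
        Matrix.mulVec_transpose, Matrix.dotProduct_mulVec]
    have hterm1 : μ' ⬝ᵥ (A.mulVec v₀) ≤ b ⬝ᵥ μ' := by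
      rw [dotProduct, dotProduct]
      refine Finset.sum_le_sum fun j _ => ?_
      have h1 : b j ≤ A.mulVec v₀ j := hv₀Vs.1 j
      have h2 : μ' j ≤ 0 := hμ'0 j
      nlinarith
    have hterm2 : γ' * zs ≤ c' ⬝ᵥ δ' := by
      rcases eq_or_lt_of_le hγ'0 with hγ'eq | hγ'pos
      · have hAδ : ∀ j, 0 ≤ A.mulVec δ' j := by
          intro j
          have := hfeas j
          simpa [← hγ'eq] using this
        have hδ'0 : δ' = 0 := by
          refine ray_eq_zero hbd (v₀ := v₁) ?_
          intro t ht j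
          have heq2 : A.mulVec (v₁ + t • δ') j = A.mulVec v₁ j + t * A.mulVec δ' j := by
            simp [Matrix.mulVec_add, Matrix.mulVec_smul]
          rw [heq2]
          have h1 := hv₁V j
          have h2 := hAδ j
          nlinarith
        rw [hδ'0, ← hγ'eq]
        simp
      · have hv₂V : γ'⁻¹ • δ' ∈ polyV A b := by
          intro j
          have h1 : A.mulVec (γ'⁻¹ • δ') j = γ'⁻¹ * A.mulVec δ' j := by
            simp [Matrix.mulVec_smul]
          rw [h1]
          have h2 := hfeas j
          rw [Pi.smul_apply, smul_eq_mul] at h2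
          have h3 : γ'⁻¹ * (γ' * b j) ≤ γ'⁻¹ * A.mulVec δ' j :=
            mul_le_mul_of_nonneg_left h2 (inv_nonneg.2 hγ'0)
          have h4 : γ'⁻¹ * (γ' * b j) = b j := by
            rw [← mul_assoc, inv_mul_cancel₀ hγ'pos.ne', one_mul]
          linarith
        have h3 := hzlb _ hv₂V
        have h4 : c' ⬝ᵥ (γ'⁻¹ • δ') = γ'⁻¹ * (c' ⬝ᵥ δ') := by
          rw [dotProduct_smul, smul_eq_mul]
        rw [h4] at h3
        calc γ' * zs ≤ γ' * (γ'⁻¹ * (c' ⬝ᵥ δ')) := mul_le_mul_of_nonneg_left h3 hγ'0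
          _ = c' ⬝ᵥ δ' := by field_simp
    linarith

theorem stmt_4 (m n N K : ℕ)
    (A : Matrix (Fin m) (Fin n) ℝ) (b : Fin m → ℝ)
    (hne : (polyV A b).Nonempty) (hbd : Bornology.IsBounded (polyV A b))
    (x : Fin N → Fin K → ℝ) (c : Fin N → Fin n → ℝ)
    (ω : Matrix (Fin n) (Fin K) ℝ) :
    IsLeast {r : ℝ | ∃ (μ : Fin N → Fin m → ℝ) (δ : Fin N → Fin n → ℝ) (γ : Fin N → ℝ),
        (∀ i, Aᵀ.mulVec (μ i) + γ i • ω.mulVec (x i) = (1 / (N : ℝ)) • c i ∧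
          γ i • b ≤ A.mulVec (δ i) ∧ μ i ≤ 0 ∧ 0 ≤ γ i) ∧
        r = ∑ i, (b ⬝ᵥ μ i + ω.mulVec (x i) ⬝ᵥ δ i)}
      (pessValue A b x c ω) := by
  have key := fun i : Fin N =>
    per_index A b hne hbd (ω.mulVec (x i)) ((1 / (N : ℝ)) • c i)
  choose q hq hleast using key
  have hgreat : IsGreatest {r : ℝ | ∃ v : Fin N → Fin n → ℝ,
      (∀ i, v i ∈ Vstar A b (ω.mulVec (x i))) ∧
      r = (1 / (N : ℝ)) * ∑ i, c i ⬝ᵥ v i} (∑ i, q i) := by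
    constructor
    · have hsel : ∀ i, ∃ v ∈ Vstar A b (ω.mulVec (x i)),
          q i = ((1 / (N : ℝ)) • c i) ⬝ᵥ v := fun i => (hq i).1
      choose v hv hvq using hsel
      refine ⟨v, hv, ?_⟩
      rw [Finset.mul_sum]
      exact Finset.sum_congr rfl fun i _ => by
        rw [hvq i, smul_dotProduct, smul_eq_mul]
    · rintro r ⟨v, hv, rfl⟩
      rw [Finset.mul_sum]
      refine Finset.sum_le_sum fun i _ => ?_
      have h1 : (1 / (N : ℝ)) * (c i ⬝ᵥ v i) = ((1 / (N : ℝ)) • c i) ⬝ᵥ (v i) := by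
        rw [smul_dotProduct, smul_eq_mul]
      rw [h1]
      exact (hq i).2 ⟨v i, hv i, rfl⟩
  have hpess : pessValue A b x c ω = ∑ i, q i := by
    rw [pessValue]
    exact hgreat.csSup_eq
  constructor
  · have hsel : ∀ i, ∃ (μ : Fin m → ℝ) (δ : Fin n → ℝ) (γ : ℝ),
        (Aᵀ.mulVec μ + γ • (ω.mulVec (x i)) = (1 / (N : ℝ)) • c i ∧
          γ • b ≤ A.mulVec δ ∧ μ ≤ 0 ∧ 0 ≤ γ) ∧
        q i = b ⬝ᵥ μ + (ω.mulVec (x i)) ⬝ᵥ δ := fun i => (hleast i).1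
    choose μ δ γ hfeas hval using hsel
    exact ⟨μ, δ, γ, fun i => hfeas i, by
      rw [hpess]; exact Finset.sum_congr rfl fun i _ => hval i⟩
  · rintro r ⟨μ, δ, γ, hfeas, rfl⟩
    rw [hpess]
    exact Finset.sum_le_sum fun i _ => (hleast i).2 ⟨μ i, δ i, γ i, hfeas i, rfl⟩
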